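/- Let (G,N) be a pair of finite groups which is nilpotent of class at most t, with t ≥ 2 (i.e. [N,_tG] = 1). Then exp(M^{(c)}(G,N)) divides exp(M^{(c)}(G/[N,G], N/[N,G])) · ∏_{i=1}^{t−1} exp(⊗^{c+1}([N,_iG], G/[N,_iG])), where exp(X) denotes the exponent of the group X. -/

import Mathlib

open Subgroup

/-- `itComm X Y c` is the `c`-fold iterated commutator subgroup
`[X,_c Y] = ⁅…⁅⁅X,Y⁆,Y⁆,…,Y⁆` (with `c` copies of `Y`); `itComm X Y 0 = X`. -/
def itComm {P : Type*} [Group P] (X Y : Subgroup P) : ℕ → Subgroup P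
  | 0 => X
  | c + 1 => ⁅itComm X Y c, Y⁆

instance itComm_normal {P : Type*} [Group P] (X Y : Subgroup P) [hX : X.Normal] [hY : Y.Normal]
    (c : ℕ) : (itComm X Y c).Normal := by
  induction c with
  | zero => exact hX
  | succ c ih => exact Subgroup.commutator_normal _ _

/-- The abelianization of a group, written additively. -/
abbrev AbOf (A : Type) [Group A] : Type := Additive (Abelianization A)

/-- Iterated tensor product `M ⊗ B ⊗ ⋯ ⊗ B` (with `c` factors `B`) of `ℤ`-modules. -/
noncomputable def iterTensor (M B : ModuleCat ℤ) : ℕ → ModuleCat ℤ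
  | 0 => M
  | c + 1 => ModuleCat.of ℤ (TensorProduct ℤ (iterTensor M B c) B)

/-- `⊗^{c+1}(A, B) = A^{ab} ⊗_ℤ B^{ab} ⊗_ℤ ⋯ ⊗_ℤ B^{ab}` with `c` factors `B^{ab}`. -/
noncomputable def tensorPair (A B : Type) [Group A] [Group B] (c : ℕ) : ModuleCat ℤ :=
  iterTensor (ModuleCat.of ℤ (AbOf A)) (ModuleCat.of ℤ (AbOf B)) c

set_option linter.unusedSectionVars false

open scoped commutatorElement

section AuxPairExp

variable {P : Type*} [Group P]

/-- Three subgroups lemma, sup form, for normal subgroups. -/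
lemma three_subgroups_le (H K L : Subgroup P) [H.Normal] [K.Normal] [L.Normal] :
    ⁅⁅H, K⁆, L⁆ ≤ ⁅⁅K, L⁆, H⁆ ⊔ ⁅⁅L, H⁆, K⁆ := by
  set M : Subgroup P := ⁅⁅K, L⁆, H⁆ ⊔ ⁅⁅L, H⁆, K⁆ with hM
  have hMn : M.Normal := inferInstance
  let f := QuotientGroup.mk' M
  have h1 : ⁅⁅K.map f, L.map f⁆, H.map f⁆ = ⊥ := by
    rw [← Subgroup.map_commutator, ← Subgroup.map_commutator, Subgroup.map_eq_bot_iff,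
      QuotientGroup.ker_mk']
    exact le_sup_left
  have h2 : ⁅⁅L.map f, H.map f⁆, K.map f⁆ = ⊥ := by
    rw [← Subgroup.map_commutator, ← Subgroup.map_commutator, Subgroup.map_eq_bot_iff,
      QuotientGroup.ker_mk']
    exact le_sup_right
  have h3 := Subgroup.commutator_commutator_eq_bot_of_rotate h1 h2
  rw [← Subgroup.map_commutator, ← Subgroup.map_commutator, Subgroup.map_eq_bot_iff,
    QuotientGroup.ker_mk'] at h3
  exact h3

lemma itComm_mono {X Y : Subgroup P} (h : X ≤ Y) (Z : Subgroup P) (c : ℕ) :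
    itComm X Z c ≤ itComm Y Z c := by
  induction c with
  | zero => exact h
  | succ c ih => exact Subgroup.commutator_mono ih le_rfl

lemma itComm_succ_left (X Z : Subgroup P) (c : ℕ) :
    itComm X Z (c + 1) = itComm ⁅X, Z⁆ Z c := by
  induction c with
  | zero => rfl
  | succ c ih => show ⁅itComm X Z (c+1), Z⁆ = _; rw [ih]; rfl

/-- `⁅[X,_c P], [R,_k P]⁆ ≤ [R, _{k+c+1} P]` for normal `X R`. -/
lemma itComm_commutator_itComm_le (X R : Subgroup P) [X.Normal] [R.Normal] :
    ∀ c k : ℕ, ⁅itComm X ⊤ c, itComm R ⊤ k⁆ ≤ itComm R ⊤ (k + c + 1) := by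
  intro c
  induction c with
  | zero =>
    intro k
    calc ⁅itComm X ⊤ 0, itComm R ⊤ k⁆ = ⁅itComm R ⊤ k, itComm X ⊤ 0⁆ :=
          Subgroup.commutator_comm _ _
      _ ≤ ⁅itComm R ⊤ k, ⊤⁆ := Subgroup.commutator_mono le_rfl le_top
      _ = itComm R ⊤ (k + 0 + 1) := rfl
  | succ c ih =>
    intro k
    have h3 := three_subgroups_le (itComm X ⊤ c) (⊤ : Subgroup P) (itComm R ⊤ k)
    refine le_trans h3 (sup_le ?_ ?_)
    · calc ⁅⁅(⊤ : Subgroup P), itComm R ⊤ k⁆, itComm X ⊤ c⁆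
          = ⁅⁅itComm R ⊤ k, ⊤⁆, itComm X ⊤ c⁆ := by
            rw [Subgroup.commutator_comm (⊤ : Subgroup P) (itComm R ⊤ k)]
        _ = ⁅itComm X ⊤ c, itComm R ⊤ (k+1)⁆ := Subgroup.commutator_comm _ _
        _ ≤ itComm R ⊤ ((k+1) + c + 1) := ih (k+1)
        _ = itComm R ⊤ (k + (c+1) + 1) := by rw [show (k+1)+c+1 = k+(c+1)+1 from by ring]
    · calc ⁅⁅itComm R ⊤ k, itComm X ⊤ c⁆, (⊤ : Subgroup P)⁆
          = ⁅⁅itComm X ⊤ c, itComm R ⊤ k⁆, (⊤ : Subgroup P)⁆ := by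
            rw [Subgroup.commutator_comm (itComm R ⊤ k) (itComm X ⊤ c)]
        _ ≤ ⁅itComm R ⊤ (k + c + 1), (⊤ : Subgroup P)⁆ :=
            Subgroup.commutator_mono (ih k) le_rfl
        _ = itComm R ⊤ (k + (c+1) + 1) := rfl
  
/-- `⁅[X,_c P], ⁅⊤,⊤⁆⁆ ≤ [X,_{c+2} P]`. -/
lemma itComm_commutator_top_le (X : Subgroup P) [X.Normal] (c : ℕ) :
    ⁅itComm X ⊤ c, ⁅(⊤ : Subgroup P), ⊤⁆⁆ ≤ itComm X ⊤ (c + 2) := by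
  have h3 := three_subgroups_le (⊤ : Subgroup P) (⊤ : Subgroup P) (itComm X ⊤ c)
  have : ⁅itComm X ⊤ c, ⁅(⊤ : Subgroup P), ⊤⁆⁆ = ⁅⁅(⊤:Subgroup P), ⊤⁆, itComm X ⊤ c⁆ :=
    Subgroup.commutator_comm _ _
  rw [this]
  refine le_trans h3 (sup_le ?_ ?_)
  · refine le_of_eq ?_
    rw [Subgroup.commutator_comm (⊤ : Subgroup P) (itComm X ⊤ c)]
    rfl
  · exact le_rfl
section qt
variable {F : Type} [Group F] (A B : Subgroup F) [A.Normal] [B.Normal] (c : ℕ)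

def Qt : Type := ↥(itComm A ⊤ c) ⧸ (itComm B ⊤ c).subgroupOf (itComm A ⊤ c)

instance : Group (Qt A B c) := inferInstanceAs (Group (_ ⧸ _))

def qmk (x : F) (hx : x ∈ itComm A ⊤ c) : Qt A B c := QuotientGroup.mk ⟨x, hx⟩

variable {A B c}

lemma qmk_mul {x y : F} (hx : x ∈ itComm A ⊤ c) (hy : y ∈ itComm A ⊤ c) :
    qmk A B c (x * y) (mul_mem hx hy) = qmk A B c x hx * qmk A B c y hy := rfl

lemma qmk_one (h : (1 : F) ∈ itComm A ⊤ c) : qmk A B c 1 h = 1 := rfl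

lemma qmk_inv {x : F} (hx : x ∈ itComm A ⊤ c) :
    qmk A B c x⁻¹ (inv_mem hx) = (qmk A B c x hx)⁻¹ := rfl

lemma qmk_eq_one {x : F} (hx : x ∈ itComm A ⊤ c) :
    qmk A B c x hx = 1 ↔ x ∈ itComm B ⊤ c := by
  show (QuotientGroup.mk ⟨x, hx⟩ : ↥(itComm A ⊤ c) ⧸ (itComm B ⊤ c).subgroupOf (itComm A ⊤ c)) = 1 ↔ _
  rw [QuotientGroup.eq_one_iff, Subgroup.mem_subgroupOf]

lemma qmk_eq_of {x y : F} (hx : x ∈ itComm A ⊤ c) (hy : y ∈ itComm A ⊤ c)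
    (h : x⁻¹ * y ∈ itComm B ⊤ c) : qmk A B c x hx = qmk A B c y hy := by
  show (QuotientGroup.mk ⟨x, hx⟩ : ↥(itComm A ⊤ c) ⧸ (itComm B ⊤ c).subgroupOf (itComm A ⊤ c))
    = QuotientGroup.mk ⟨y, hy⟩
  rw [QuotientGroup.eq]
  rw [Subgroup.mem_subgroupOf]
  exact h

lemma qmk_hcongr {x y : F} (h : x = y) (hx : x ∈ itComm A ⊤ c) (hy : y ∈ itComm A ⊤ c) :
    qmk A B c x hx = qmk A B c y hy := by subst h; rfl

lemma qmk_pow {x : F} (hx : x ∈ itComm A ⊤ c) (n : ℕ) :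
    qmk A B c (x ^ n) (pow_mem hx n) = (qmk A B c x hx) ^ n := by
  induction n with
  | zero => simpa using qmk_one _
  | succ n ih =>
    have h1 : qmk A B c (x ^ (n+1)) (pow_mem hx (n+1))
        = qmk A B c (x ^ n * x) (mul_mem (pow_mem hx n) hx) := qmk_hcongr (pow_succ x n) _ _
    rw [h1, qmk_mul (pow_mem hx n) hx, ih, pow_succ]

lemma qmk_surjective (q : Qt A B c) : ∃ x, ∃ hx : x ∈ itComm A ⊤ c, q = qmk A B c x hx := by
  induction q using QuotientGroup.induction_on with
  | _ a => exact ⟨a, a.2, rfl⟩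

lemma qt_mul_comm (hc : ⁅itComm A ⊤ c, itComm A ⊤ c⁆ ≤ itComm B ⊤ c) (q r : Qt A B c) :
    q * r = r * q := by
  obtain ⟨x, hx, rfl⟩ := qmk_surjective q
  obtain ⟨y, hy, rfl⟩ := qmk_surjective r
  rw [← qmk_mul, ← qmk_mul]
  apply qmk_eq_of
  have h : (x * y)⁻¹ * (y * x) = ⁅y⁻¹, x⁻¹⁆ := by
    simp only [commutatorElement_def]; group
  rw [h]
  exact hc (Subgroup.commutator_mem_commutator (inv_mem hy) (inv_mem hx))
end qt

section core
variable {F G : Type} [Group F] [Group G]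

lemma exists_pairing (π : F →* G) (hπ : Function.Surjective π) (K : Subgroup G) [K.Normal]
    (A B : Subgroup F) [A.Normal] [B.Normal]
    (hRB : π.ker ≤ B) (hA : K.comap π = A)
    (hgen : ∀ a ∈ A, ∃ u ∈ commutator F, u⁻¹ * a ∈ π.ker)
    (hXZ : ∀ k : ℕ, itComm A ⊤ (k+1) ≤ itComm B ⊤ k) (c : ℕ) :
    ∃ Λ : Qt A B c → AbOf (G ⧸ K) → Qt A B (c+1),
      (∀ q q' b, Λ (q * q') b = Λ q b * Λ q' b) ∧
      (∀ q b b', Λ q (b + b') = Λ q b * Λ q b') ∧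
      (∀ (x : F) (hx : x ∈ itComm A ⊤ c) (f : F),
        Λ (qmk A B c x hx) (Additive.ofMul (Abelianization.of (QuotientGroup.mk (π f))))
          = qmk A B (c+1) ⁅x, f⁆
              (Subgroup.commutator_mem_commutator hx (Subgroup.mem_top f))) := by
  classical
  have hmem : ∀ (x f : F), x ∈ itComm A ⊤ c → ⁅x, f⁆ ∈ itComm A ⊤ (c+1) :=
    fun x f hx => Subgroup.commutator_mem_commutator hx (Subgroup.mem_top f)
  have hXR : ⁅itComm A ⊤ c, π.ker⁆ ≤ itComm B ⊤ (c+1) := by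
    have h0 := itComm_commutator_itComm_le A π.ker c 0
    rw [Nat.zero_add] at h0
    exact le_trans h0 (itComm_mono hRB ⊤ (c+1))
  have hXT : ⁅itComm A ⊤ c, ⁅(⊤ : Subgroup F), ⊤⁆⁆ ≤ itComm B ⊤ (c+1) :=
    le_trans (itComm_commutator_top_le A c) (hXZ (c+1))
  have hxA : ∀ x ∈ itComm A ⊤ c, ∀ a ∈ A, ⁅x, a⁆ ∈ itComm B ⊤ (c+1) := by
    intro x hx a ha
    obtain ⟨u, hu, hr⟩ := hgen a ha
    have h1 : ⁅x, u⁆ ∈ itComm B ⊤ (c+1) := hXT (Subgroup.commutator_mem_commutator hx hu)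
    have h2 : ⁅x, u⁻¹ * a⁆ ∈ itComm B ⊤ (c+1) := hXR (Subgroup.commutator_mem_commutator hx hr)
    have hconj : u * ⁅x, u⁻¹ * a⁆ * u⁻¹ ∈ itComm B ⊤ (c+1) :=
      (itComm_normal B ⊤ (c+1)).conj_mem _ h2 u
    have hident : ⁅x, a⁆ = ⁅x, u⁆ * (u * ⁅x, u⁻¹ * a⁆ * u⁻¹) := by
      simp only [commutatorElement_def]
      group
    rw [hident]
    exact mul_mem h1 hconj
  have hcomm1 : ⁅itComm A ⊤ (c+1), itComm A ⊤ (c+1)⁆ ≤ itComm B ⊤ (c+1) :=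
    le_trans (Subgroup.commutator_mono le_rfl le_top) (hXZ (c+1))
  letI : CommGroup (Qt A B (c+1)) :=
    { (inferInstance : Group (Qt A B (c+1))) with mul_comm := qt_mul_comm hcomm1 }
  have hconjQ : ∀ (g w : F) (hw : w ∈ itComm A ⊤ (c+1)),
      qmk A B (c+1) (g * w * g⁻¹) ((itComm_normal A ⊤ (c+1)).conj_mem w hw g)
        = qmk A B (c+1) w hw := by
    intro g w hw
    apply qmk_eq_of
    have h : (g * w * g⁻¹)⁻¹ * w = ⁅w⁻¹, g⁆⁻¹ := by
      simp only [commutatorElement_def]; group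
    rw [h]
    refine inv_mem (hXZ (c+1) ?_)
    exact Subgroup.commutator_mem_commutator (inv_mem hw) (Subgroup.mem_top g)
  have hw : ∀ (g w : F), w ∈ itComm A ⊤ (c+1) → ⁅g, w⁆ ∈ itComm B ⊤ (c+1) := by
    intro g w hww
    have h1 : ⁅g, w⁆ ∈ ⁅(⊤ : Subgroup F), itComm A ⊤ (c+1)⁆ :=
      Subgroup.commutator_mem_commutator (Subgroup.mem_top g) hww
    rw [Subgroup.commutator_comm] at h1
    exact hXZ (c+1) h1
  let μ : ∀ (x : F), x ∈ itComm A ⊤ c → (F →* Qt A B (c+1)) := fun x hx =>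
    MonoidHom.mk' (fun f => qmk A B (c+1) ⁅x, f⁆ (hmem x f hx)) (by
      intro f g
      show qmk A B (c+1) ⁅x, f * g⁆ (hmem x (f*g) hx)
        = qmk A B (c+1) ⁅x, f⁆ (hmem x f hx) * qmk A B (c+1) ⁅x, g⁆ (hmem x g hx)
      rw [← qmk_mul]
      refine qmk_eq_of _ _ ?_
      have hval : (⁅x, f * g⁆)⁻¹ * (⁅x, f⁆ * ⁅x, g⁆) = ⁅f, ⁅x, g⁆⁻¹⁆ := by
        simp only [commutatorElement_def]; group
      rw [hval]
      exact hw f _ (inv_mem (hmem x g hx)))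
  have hμ : ∀ (x : F) (hx : x ∈ itComm A ⊤ c) (f : F),
      μ x hx f = qmk A B (c+1) ⁅x, f⁆ (hmem x f hx) := fun x hx f => rfl
  have hμker : ∀ (x : F) (hx : x ∈ itComm A ⊤ c), π.ker ≤ (μ x hx).ker := by
    intro x hx r hr
    rw [MonoidHom.mem_ker, hμ x hx r]
    exact (qmk_eq_one _).mpr (hXR (Subgroup.commutator_mem_commutator hx hr))
  let finv : G → F := Function.surjInv hπ
  have hfinv : Function.RightInverse finv π := Function.rightInverse_surjInv hπ
  let gm : ∀ (x : F), x ∈ itComm A ⊤ c → (G →* Qt A B (c+1)) := fun x hx =>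
    π.liftOfRightInverse finv hfinv ⟨μ x hx, hμker x hx⟩
  have hgm : ∀ (x : F) (hx : x ∈ itComm A ⊤ c) (f : F), gm x hx (π f) = μ x hx f :=
    fun x hx f => π.liftOfRightInverse_comp_apply finv hfinv ⟨μ x hx, hμker x hx⟩ f
  have hgmK : ∀ (x : F) (hx : x ∈ itComm A ⊤ c), K ≤ (gm x hx).ker := by
    intro x hx k hk
    obtain ⟨a, rfl⟩ := hπ k
    have ha : a ∈ A := by rw [← hA]; exact Subgroup.mem_comap.mpr hk
    rw [MonoidHom.mem_ker, hgm x hx a, hμ x hx a]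
    exact (qmk_eq_one _).mpr (hxA x hx a ha)
  let ν : ∀ (x : F), x ∈ itComm A ⊤ c → (Abelianization (G ⧸ K) →* Qt A B (c+1)) := fun x hx =>
    Abelianization.lift (QuotientGroup.lift K (gm x hx) (hgmK x hx))
  have hν : ∀ (x : F) (hx : x ∈ itComm A ⊤ c) (f : F),
      ν x hx (Abelianization.of (QuotientGroup.mk (π f)))
        = qmk A B (c+1) ⁅x, f⁆ (hmem x f hx) := by
    intro x hx f
    show Abelianization.lift _ (Abelianization.of _) = _
    rw [Abelianization.lift_apply_of, QuotientGroup.lift_mk]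
    exact hgm x hx f
  have hab : ∀ b : Abelianization (G ⧸ K),
      ∃ f : F, b = Abelianization.of (QuotientGroup.mk (π f)) := by
    intro b
    obtain ⟨q, rfl⟩ : ∃ q : G ⧸ K, Abelianization.of q = b :=
      Quotient.exists_rep b
    obtain ⟨g, rfl⟩ := QuotientGroup.mk_surjective q
    obtain ⟨f, rfl⟩ := hπ g
    exact ⟨f, rfl⟩
  let NX : ∀ (x : F), x ∈ itComm A ⊤ c → (AbOf (G ⧸ K) →+ Additive (Qt A B (c+1))) :=
    fun x hx => MonoidHom.toAdditive (ν x hx)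
  have hNX : ∀ (x : F) (hx : x ∈ itComm A ⊤ c) (f : F),
      NX x hx (Additive.ofMul (Abelianization.of (QuotientGroup.mk (π f))))
        = Additive.ofMul (qmk A B (c+1) ⁅x, f⁆ (hmem x f hx)) := by
    intro x hx f
    show Additive.ofMul (ν x hx (Abelianization.of (QuotientGroup.mk (π f)))) = _
    rw [hν x hx f]
  have hext : ∀ (φ ψ : AbOf (G ⧸ K) →+ Additive (Qt A B (c+1))),
      (∀ f : F, φ (Additive.ofMul (Abelianization.of (QuotientGroup.mk (π f))))
        = ψ (Additive.ofMul (Abelianization.of (QuotientGroup.mk (π f))))) → φ = ψ := by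
    intro φ ψ h
    refine AddMonoidHom.ext fun b => ?_
    obtain ⟨f, hf⟩ := hab (Additive.toMul b)
    have hb : b = Additive.ofMul (Abelianization.of (QuotientGroup.mk (π f))) := by
      rw [← hf]; rfl
    rw [hb]; exact h f
  let Λ₀ : ↥(itComm A ⊤ c) →* Multiplicative (AbOf (G ⧸ K) →+ Additive (Qt A B (c+1))) :=
    MonoidHom.mk' (fun a => Multiplicative.ofAdd (NX (a : F) a.2)) (by
      intro a b
      have key : NX ((a * b : ↥(itComm A ⊤ c)) : F) (a * b).2
          = NX (a : F) a.2 + NX (b : F) b.2 := by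
        apply hext
        intro f
        show (NX ((a : F) * (b : F)) (mul_mem a.2 b.2))
            (Additive.ofMul (Abelianization.of (QuotientGroup.mk (π f))))
          = (NX (a : F) a.2 + NX (b : F) b.2)
            (Additive.ofMul (Abelianization.of (QuotientGroup.mk (π f))))
        rw [hNX ((a : F) * (b : F)) (mul_mem a.2 b.2) f, AddMonoidHom.add_apply,
          hNX (a : F) a.2 f, hNX (b : F) b.2 f]
        have m1 : (a : F) * ⁅(b : F), f⁆ * (a : F)⁻¹ ∈ itComm A ⊤ (c+1) :=
          (itComm_normal A ⊤ (c+1)).conj_mem _ (hmem _ f b.2) a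
        have e1 : qmk A B (c+1) ⁅((a : F) * (b : F)), f⁆ (hmem _ f (mul_mem a.2 b.2))
            = qmk A B (c+1) ⁅(a : F), f⁆ (hmem _ f a.2)
              * qmk A B (c+1) ⁅(b : F), f⁆ (hmem _ f b.2) := by
          calc qmk A B (c+1) ⁅((a : F) * (b : F)), f⁆ (hmem _ f (mul_mem a.2 b.2))
              = qmk A B (c+1) (((a : F) * ⁅(b : F), f⁆ * (a : F)⁻¹) * ⁅(a : F), f⁆)
                  (mul_mem m1 (hmem _ f a.2)) :=
                qmk_hcongr (by simp only [commutatorElement_def]; group) _ _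
            _ = qmk A B (c+1) ((a : F) * ⁅(b : F), f⁆ * (a : F)⁻¹) m1
                  * qmk A B (c+1) ⁅(a : F), f⁆ (hmem _ f a.2) := qmk_mul _ _
            _ = qmk A B (c+1) ⁅(b : F), f⁆ (hmem _ f b.2)
                  * qmk A B (c+1) ⁅(a : F), f⁆ (hmem _ f a.2) := by rw [hconjQ]
            _ = qmk A B (c+1) ⁅(a : F), f⁆ (hmem _ f a.2)
                  * qmk A B (c+1) ⁅(b : F), f⁆ (hmem _ f b.2) := mul_comm _ _
        rw [e1]
        rfl
      show Multiplicative.ofAdd (NX ((a * b : ↥(itComm A ⊤ c)) : F) (a * b).2) = _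
      rw [key]
      rfl)
  have hΛ₀ : ∀ a : ↥(itComm A ⊤ c), Λ₀ a = Multiplicative.ofAdd (NX (a : F) a.2) :=
    fun a => rfl
  have hΛ₀ker : (itComm B ⊤ c).subgroupOf (itComm A ⊤ c) ≤ Λ₀.ker := by
    intro a ha
    rw [MonoidHom.mem_ker, hΛ₀]
    have : NX (a : F) a.2 = 0 := by
      apply hext
      intro f
      rw [hNX (a : F) a.2 f]
      have h1 : qmk A B (c+1) ⁅(a : F), f⁆ (hmem _ f a.2) = 1 :=
        (qmk_eq_one _).mpr
          (Subgroup.commutator_mem_commutator (Subgroup.mem_subgroupOf.mp ha)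
            (Subgroup.mem_top f))
      rw [h1]
      rfl
    rw [this]
    rfl
  let Λ₁ : Qt A B c →* Multiplicative (AbOf (G ⧸ K) →+ Additive (Qt A B (c+1))) :=
    QuotientGroup.lift _ Λ₀ hΛ₀ker
  refine ⟨fun q b => Additive.toMul ((Multiplicative.toAdd (Λ₁ q)) b), ?_, ?_, ?_⟩
  · intro q q' b
    show Additive.toMul ((Multiplicative.toAdd (Λ₁ (q * q'))) b)
      = Additive.toMul ((Multiplicative.toAdd (Λ₁ q)) b)
        * Additive.toMul ((Multiplicative.toAdd (Λ₁ q')) b)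
    rw [map_mul]
    rfl
  · intro q b b'
    show Additive.toMul ((Multiplicative.toAdd (Λ₁ q)) (b + b'))
      = Additive.toMul ((Multiplicative.toAdd (Λ₁ q)) b)
        * Additive.toMul ((Multiplicative.toAdd (Λ₁ q)) b')
    rw [map_add]
    rfl
  · intro x hx f
    have h1 : Λ₁ (qmk A B c x hx) = Λ₀ ⟨x, hx⟩ := QuotientGroup.lift_mk' _ _ _
    show Additive.toMul ((Multiplicative.toAdd (Λ₁ (qmk A B c x hx)))
      (Additive.ofMul (Abelianization.of (QuotientGroup.mk (π f))))) = _
    rw [h1, hΛ₀]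
    show Additive.toMul (NX x hx (Additive.ofMul (Abelianization.of (QuotientGroup.mk (π f))))) = _
    rw [hNX x hx f]
    rfl

lemma exists_surj (π : F →* G) (hπ : Function.Surjective π) (K : Subgroup G) [K.Normal]
    (A B : Subgroup F) [A.Normal] [B.Normal]
    (hRB : π.ker ≤ B) (hA : K.comap π = A)
    (hgen : ∀ a ∈ A, ∃ u ∈ commutator F, u⁻¹ * a ∈ π.ker)
    (hXZ : ∀ k : ℕ, itComm A ⊤ (k+1) ≤ itComm B ⊤ k) : ∀ c : ℕ,
    ∃ Φ : ↥(tensorPair ↥K (G ⧸ K) c) →+ Additive (Qt A B c), Function.Surjective Φ := by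
  intro c
  induction c with
  | zero =>
    have hcomm0 : ⁅itComm A ⊤ 0, itComm A ⊤ 0⁆ ≤ itComm B ⊤ 0 :=
      le_trans (Subgroup.commutator_mono le_rfl le_top) (hXZ 0)
    letI : CommGroup (Qt A B 0) :=
      { (inferInstance : Group (Qt A B 0)) with mul_comm := qt_mul_comm hcomm0 }
    have hmapsto : ∀ a : ↥A, π a ∈ K := by
      intro a
      rw [← Subgroup.mem_comap, hA]
      exact a.2
    let πA : ↥A →* ↥K := (π.comp A.subtype).codRestrict K hmapsto
    have hπAval : ∀ a : ↥A, (πA a : G) = π a := fun a => rfl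
    have hπA : Function.Surjective πA := by
      intro k
      obtain ⟨f, hf⟩ := hπ (k : G)
      have hfA : f ∈ A := by
        rw [← hA]
        exact Subgroup.mem_comap.mpr (by rw [hf]; exact k.2)
      exact ⟨⟨f, hfA⟩, Subtype.ext hf⟩
    let q0 : ↥A →* Qt A B 0 :=
      (QuotientGroup.mk' ((itComm B ⊤ 0).subgroupOf (itComm A ⊤ 0)))
    have hq0 : ∀ (x : F) (hx : x ∈ A), q0 ⟨x, hx⟩ = qmk A B 0 x hx := fun x hx => rfl
    have hq0ker : πA.ker ≤ q0.ker := by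
      intro a haK
      have h1 : π a = 1 := by
        have := congrArg (Subtype.val) (MonoidHom.mem_ker.mp haK)
        exact this
      have h2 : (a : F) ∈ B := hRB (MonoidHom.mem_ker.mpr h1)
      rw [MonoidHom.mem_ker]
      have h3 : q0 ⟨(a : F), a.2⟩ = qmk A B 0 (a : F) a.2 := hq0 _ _
      have h4 : qmk A B 0 (a : F) a.2 = 1 := (qmk_eq_one _).mpr h2
      rw [show a = (⟨(a : F), a.2⟩ : ↥A) from rfl, h3, h4]
    let g0 : ↥K →* Qt A B 0 :=
      πA.liftOfRightInverse (Function.surjInv hπA) (Function.rightInverse_surjInv hπA)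
        ⟨q0, hq0ker⟩
    have hg0 : ∀ a : ↥A, g0 (πA a) = q0 a := fun a =>
      πA.liftOfRightInverse_comp_apply _ _ ⟨q0, hq0ker⟩ a
    let Φ' : Abelianization ↥K →* Qt A B 0 := Abelianization.lift g0
    let Φ0 : AbOf ↥K →+ Additive (Qt A B 0) := MonoidHom.toAdditive Φ'
    refine ⟨Φ0, ?_⟩
    intro z
    obtain ⟨x, hx, hq⟩ := qmk_surjective (Additive.toMul z)
    refine ⟨Additive.ofMul (Abelianization.of (πA ⟨x, hx⟩)), ?_⟩
    show Additive.ofMul (Φ' (Abelianization.of (πA ⟨x, hx⟩))) = z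
    rw [show Φ' (Abelianization.of (πA ⟨x, hx⟩)) = g0 (πA ⟨x, hx⟩) from
        Abelianization.lift_apply_of .., hg0, hq0 x hx, ← hq]
    rfl
  | succ c ih =>
    obtain ⟨Φ, hΦ⟩ := ih
    obtain ⟨Λ, hΛmul, hΛadd, hΛ⟩ := exists_pairing π hπ K A B hRB hA hgen hXZ c
    have hcommc : ⁅itComm A ⊤ c, itComm A ⊤ c⁆ ≤ itComm B ⊤ c :=
      le_trans (Subgroup.commutator_mono le_rfl le_top) (hXZ c)
    have hcommc1 : ⁅itComm A ⊤ (c+1), itComm A ⊤ (c+1)⁆ ≤ itComm B ⊤ (c+1) :=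
      le_trans (Subgroup.commutator_mono le_rfl le_top) (hXZ (c+1))
    letI : CommGroup (Qt A B c) :=
      { (inferInstance : Group (Qt A B c)) with mul_comm := qt_mul_comm hcommc }
    letI : CommGroup (Qt A B (c+1)) :=
      { (inferInstance : Group (Qt A B (c+1))) with mul_comm := qt_mul_comm hcommc1 }
    let inner : Qt A B c → (AbOf (G ⧸ K) →+ Additive (Qt A B (c+1))) := fun q =>
      AddMonoidHom.mk' (fun b => Additive.ofMul (Λ q b)) (fun b b' => by
        show Additive.ofMul (Λ q (b + b'))
          = Additive.ofMul (Λ q b) + Additive.ofMul (Λ q b')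
        rw [hΛadd]; rfl)
    let Λ' : Additive (Qt A B c) →+ (AbOf (G ⧸ K) →+ Additive (Qt A B (c+1))) :=
      AddMonoidHom.mk' (fun q => inner (Additive.toMul q)) (fun q q' => by
        refine AddMonoidHom.ext fun b => ?_
        show Additive.ofMul (Λ (Additive.toMul (q + q')) b) = _
        rw [show Additive.toMul (q + q') = Additive.toMul q * Additive.toMul q' from rfl, hΛmul]
        rfl)
    have hΛ' : ∀ (q : Qt A B c) (b : AbOf (G ⧸ K)),
        Λ' (Additive.ofMul q) b = Additive.ofMul (Λ q b) := fun q b => rfl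
    let bil : Additive (Qt A B c) →ₗ[ℤ] (AbOf (G ⧸ K)) →ₗ[ℤ] Additive (Qt A B (c+1)) :=
      LinearMap.mk₂ ℤ (fun p b => Λ' p b)
        (fun p q b => by show Λ' (p + q) b = Λ' p b + Λ' q b; rw [map_add]; rfl)
        (fun n p b => by show Λ' (n • p) b = n • (Λ' p b); rw [map_zsmul]; rfl)
        (fun p b b' => map_add _ _ _)
        (fun n p b => map_zsmul _ _ _)
    let TL : TensorProduct ℤ (Additive (Qt A B c)) (AbOf (G ⧸ K)) →ₗ[ℤ]
        Additive (Qt A B (c+1)) := TensorProduct.lift bil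
    have hTLtmul : ∀ (p : Additive (Qt A B c)) (b : AbOf (G ⧸ K)),
        TL (p ⊗ₜ[ℤ] b) = Λ' p b := fun p b => rfl
    let Φl : ↥(tensorPair ↥K (G ⧸ K) c) →ₗ[ℤ] Additive (Qt A B c) :=
      { toFun := Φ, map_add' := map_add Φ, map_smul' := fun n x => by
          rw [RingHom.id_apply]
          exact (congrArg Φ (int_smul_eq_zsmul (tensorPair ↥K (G ⧸ K) c).isModule n x)).trans
            (map_zsmul Φ n x) }
    let MM := TensorProduct.map Φl (LinearMap.id (R := ℤ) (M := AbOf (G ⧸ K)))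
    have hMM : Function.Surjective MM :=
      TensorProduct.map_surjective hΦ Function.surjective_id
    have hTL : Function.Surjective TL := by
      have main : ∀ (w : F) (hw : w ∈ itComm A ⊤ (c+1)),
          ∃ y, TL y = Additive.ofMul (qmk A B (c+1) w hw) := by
        intro w hw
        refine Subgroup.closure_induction
          (p := fun w hw => ∃ y, TL y = Additive.ofMul (qmk A B (c+1) w hw)) ?_ ?_ ?_ ?_ hw
        · rintro x ⟨g₁, h₁, g₂, -, rfl⟩
          refine ⟨(Additive.ofMul (qmk A B c g₁ h₁)) ⊗ₜ[ℤ]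
            (Additive.ofMul (Abelianization.of (QuotientGroup.mk (π g₂)))), ?_⟩
          rw [hTLtmul, hΛ']
          exact congrArg Additive.ofMul (hΛ g₁ h₁ g₂)
        · exact ⟨0, by rw [map_zero]; rfl⟩
        · rintro x y hx hy ⟨y₁, hy₁⟩ ⟨y₂, hy₂⟩
          refine ⟨y₁ + y₂, ?_⟩
          rw [map_add, hy₁, hy₂]
          rfl
        · rintro x hx ⟨y₁, hy₁⟩
          refine ⟨-y₁, ?_⟩
          rw [map_neg, hy₁]
          rfl
      intro z
      obtain ⟨w, hw, hq⟩ := qmk_surjective (Additive.toMul z)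
      obtain ⟨y, hy⟩ := main w hw
      refine ⟨y, ?_⟩
      rw [hy, ← hq]
      rfl
    refine ⟨(TL.comp MM).toAddMonoidHom, ?_⟩
    exact hTL.comp hMM

lemma core_pow_mem (π : F →* G) (hπ : Function.Surjective π) (K : Subgroup G) [K.Normal]
    (A B : Subgroup F) [A.Normal] [B.Normal]
    (hRB : π.ker ≤ B) (hA : K.comap π = A)
    (hgen : ∀ a ∈ A, ∃ u ∈ commutator F, u⁻¹ * a ∈ π.ker)
    (hXZ : ∀ k : ℕ, itComm A ⊤ (k+1) ≤ itComm B ⊤ k) (c : ℕ)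
    (x : F) (hx : x ∈ itComm A ⊤ c) :
    x ^ AddMonoid.exponent ↥(tensorPair ↥K (G ⧸ K) c) ∈ itComm B ⊤ c := by
  obtain ⟨Φ, hΦ⟩ := exists_surj π hπ K A B hRB hA hgen hXZ c
  obtain ⟨w, hww⟩ := hΦ (Additive.ofMul (qmk A B c x hx))
  set e := AddMonoid.exponent ↥(tensorPair ↥K (G ⧸ K) c) with he
  have h0 : e • w = 0 := AddMonoid.exponent_nsmul_eq_zero w
  have h1 : (qmk A B c x hx) ^ e = 1 := by
    have h2 : e • Additive.ofMul (qmk A B c x hx) = 0 := by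
      rw [← hww, ← map_nsmul, h0, map_zero]
    exact congrArg Additive.toMul h2
  have h4 : qmk A B c (x ^ e) (pow_mem hx e) = 1 := by
    rw [qmk_pow hx e, h1]
  exact (qmk_eq_one _).mp h4

end core

end AuxPairExp

/-- `M^{(c)}(G,N) = (R ∩ [S,_c F]) / [R,_c F]`, where `R = ker π` and `S = π⁻¹(N)`,
relative to the free presentation `π : F ↠ G`. -/
def McPair {F G : Type} [Group F] [Group G] (π : F →* G) (N : Subgroup G) (c : ℕ) : Type :=
  (π.ker ⊓ itComm (N.comap π) ⊤ c : Subgroup F) ⧸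
    (itComm π.ker ⊤ c).subgroupOf (π.ker ⊓ itComm (N.comap π) ⊤ c)

noncomputable instance {F G : Type} [Group F] [Group G] (π : F →* G) (N : Subgroup G) (c : ℕ) :
    Group (McPair π N c) :=
  inferInstanceAs (Group ((π.ker ⊓ itComm (N.comap π) ⊤ c : Subgroup F) ⧸
    (itComm π.ker ⊤ c).subgroupOf (π.ker ⊓ itComm (N.comap π) ⊤ c)))

/-- `M^{(c)}(G/K, N/K) = (T ∩ [S,_c F]) / [T,_c F]`, where `T = π⁻¹(K)` and `S = π⁻¹(N)`,
relative to the free presentation `π : F ↠ G`. -/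
def McPairQuot {F G : Type} [Group F] [Group G] (π : F →* G) (N K : Subgroup G) (c : ℕ) :
    Type :=
  (K.comap π ⊓ itComm (N.comap π) ⊤ c : Subgroup F) ⧸
    (itComm (K.comap π) ⊤ c).subgroupOf (K.comap π ⊓ itComm (N.comap π) ⊤ c)

noncomputable instance {F G : Type} [Group F] [Group G] (π : F →* G) (N K : Subgroup G)
    [K.Normal] (c : ℕ) : Group (McPairQuot π N K c) :=
  inferInstanceAs (Group ((K.comap π ⊓ itComm (N.comap π) ⊤ c : Subgroup F) ⧸
    (itComm (K.comap π) ⊤ c).subgroupOf (K.comap π ⊓ itComm (N.comap π) ⊤ c)))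

/-- Let `(G,N)` be a pair of finite groups which is nilpotent of class at most `t`, `t ≥ 2`
(`[N,_t G] = 1`), and `π : F ↠ G` a free presentation.  Then `exp(M^{(c)}(G,N))` divides
`exp(M^{(c)}(G/[N,G], N/[N,G])) · ∏_{i=1}^{t−1} exp(⊗^{c+1}([N,_i G], G/[N,_i G]))`. -/
theorem exponent_multiplier_dvd_of_nilpotent_class_le {G : Type} [Group G] [Finite G]
    {F : Type} [Group F] [IsFreeGroup F] (π : F →* G) (hπ : Function.Surjective π)
    (N : Subgroup G) [N.Normal] (c t : ℕ) (hc : 1 ≤ c) (ht : 2 ≤ t)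
    (hnil : itComm N ⊤ t = ⊥) :
    Monoid.exponent (McPair π N c) ∣
      Monoid.exponent (McPairQuot π N (itComm N ⊤ 1) c) *
        ∏ i ∈ Finset.Icc 1 (t - 1),
          AddMonoid.exponent (tensorPair (itComm N ⊤ i) (G ⧸ itComm N ⊤ i) c) := by
  classical
  set e₁ := Monoid.exponent (McPairQuot π N (itComm N ⊤ 1) c) with he₁
  set e₂ : ℕ → ℕ := fun i =>
    AddMonoid.exponent (tensorPair (itComm N ⊤ i) (G ⧸ itComm N ⊤ i) c) with he₂
  -- normality of the comaps
  haveI hTnorm : ∀ i : ℕ, ((itComm N ⊤ i).comap π).Normal :=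
    fun i => Subgroup.Normal.comap (itComm_normal N ⊤ i) π
  -- the key step, from level i to level i+1, for i ≥ 1
  have step : ∀ i : ℕ, 1 ≤ i → ∀ x ∈ itComm ((itComm N ⊤ i).comap π) ⊤ c,
      x ^ e₂ i ∈ itComm ((itComm N ⊤ (i + 1)).comap π) ⊤ c := by
    intro i hi x hx
    haveI := hTnorm i
    haveI := hTnorm (i + 1)
    refine core_pow_mem π hπ (itComm N ⊤ i) ((itComm N ⊤ i).comap π)
      ((itComm N ⊤ (i + 1)).comap π) ?_ rfl ?_ ?_ c x hx
    · -- π.ker ≤ comap of level i+1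
      intro y hy
      rw [Subgroup.mem_comap]
      have : π y = 1 := hy
      rw [this]
      exact one_mem _
    · -- decomposition a = u * r with u in the commutator subgroup
      intro a ha
      obtain ⟨j, rfl⟩ : ∃ j, i = j + 1 := ⟨i - 1, by omega⟩
      have h1 : itComm N ⊤ (j + 1) ≤ ⁅(⊤ : Subgroup G), ⊤⁆ :=
        Subgroup.commutator_mono le_top le_rfl
      have h2 : Subgroup.map π (commutator F) = ⁅(⊤ : Subgroup G), ⊤⁆ := by
        rw [commutator_def, Subgroup.map_commutator,
          Subgroup.map_top_of_surjective π hπ]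
      have h3 : π a ∈ Subgroup.map π (commutator F) := by
        rw [h2]
        exact h1 (Subgroup.mem_comap.mp ha)
      obtain ⟨u, hu, huv⟩ := h3
      refine ⟨u, hu, ?_⟩
      have : π (u⁻¹ * a) = 1 := by
        rw [map_mul, map_inv, huv]
        group
      exact this
    · -- hXZ
      intro k
      have hAF : ⁅(itComm N ⊤ i).comap π, (⊤ : Subgroup F)⁆ ≤ (itComm N ⊤ (i + 1)).comap π := by
        rw [← Subgroup.map_le_iff_le_comap, Subgroup.map_commutator]
        refine Subgroup.commutator_mono ?_ le_top
        rw [Subgroup.map_comap_eq_self_of_surjective hπ]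
      calc itComm ((itComm N ⊤ i).comap π) ⊤ (k + 1)
          = itComm ⁅(itComm N ⊤ i).comap π, ⊤⁆ ⊤ k := itComm_succ_left _ _ _
        _ ≤ itComm ((itComm N ⊤ (i + 1)).comap π) ⊤ k := itComm_mono hAF ⊤ k
  -- base step : from McPairQuot at level 1
  have base : ∀ x : F, x ∈ π.ker ⊓ itComm (N.comap π) ⊤ c →
      x ^ e₁ ∈ itComm ((itComm N ⊤ 1).comap π) ⊤ c := by
    intro x hx
    have hx1 : x ∈ (itComm N ⊤ 1).comap π ⊓ itComm (N.comap π) ⊤ c := by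
      refine ⟨Subgroup.mem_comap.mpr ?_, hx.2⟩
      have : π x = 1 := hx.1
      rw [this]
      exact one_mem _
    set P := ((itComm N ⊤ 1).comap π ⊓ itComm (N.comap π) ⊤ c : Subgroup F) with hP
    set Z := (itComm ((itComm N ⊤ 1).comap π) ⊤ c).subgroupOf P with hZ
    have hg : ((QuotientGroup.mk (⟨x, hx1⟩ : ↥P) : P ⧸ Z)) ^ e₁ = 1 := by
      have := Monoid.pow_exponent_eq_one
        (G := McPairQuot π N (itComm N ⊤ 1) c)
        (QuotientGroup.mk (⟨x, hx1⟩ : ↥P))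
      exact this
    rw [show ((QuotientGroup.mk (⟨x, hx1⟩ : ↥P) : P ⧸ Z)) ^ e₁
        = QuotientGroup.mk ((⟨x, hx1⟩ : ↥P) ^ e₁) from
        ((QuotientGroup.mk' Z).map_pow _ _).symm, QuotientGroup.eq_one_iff] at hg
    have := Subgroup.mem_subgroupOf.mp hg
    simpa using this
  -- the chain
  have chain : ∀ k : ℕ, ∀ x : F, x ∈ π.ker ⊓ itComm (N.comap π) ⊤ c →
      x ^ (e₁ * ∏ i ∈ Finset.Icc 1 k, e₂ i)
        ∈ itComm ((itComm N ⊤ (k + 1)).comap π) ⊤ c := by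
    intro k
    induction k with
    | zero =>
      intro x hx
      simpa using base x hx
    | succ k ih =>
      intro x hx
      rw [Finset.prod_Icc_succ_top (Nat.le_add_left 1 k), ← mul_assoc, pow_mul]
      exact step (k + 1) (Nat.le_add_left 1 k) _ (ih x hx)
  -- conclude
  apply Monoid.exponent_dvd_of_forall_pow_eq_one
  intro g
  show g ^ (e₁ * ∏ i ∈ Finset.Icc 1 (t - 1), e₂ i) = 1
  set P := (π.ker ⊓ itComm (N.comap π) ⊤ c : Subgroup F) with hP
  set Z := (itComm π.ker ⊤ c).subgroupOf P with hZ
  induction g using QuotientGroup.induction_on with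
  | _ y =>
  have hmem := chain (t - 1) (y : F) y.2
  rw [show t - 1 + 1 = t from by omega, hnil] at hmem
  have hker : ((⊥ : Subgroup G).comap π) = π.ker := by
    ext z
    simp [Subgroup.mem_comap, MonoidHom.mem_ker]
  rw [hker] at hmem
  have hdone : ((QuotientGroup.mk y : P ⧸ Z)) ^ (e₁ * ∏ i ∈ Finset.Icc 1 (t - 1), e₂ i)
      = 1 := by
    rw [show ((QuotientGroup.mk y : P ⧸ Z)) ^ (e₁ * ∏ i ∈ Finset.Icc 1 (t - 1), e₂ i)
        = QuotientGroup.mk (y ^ (e₁ * ∏ i ∈ Finset.Icc 1 (t - 1), e₂ i)) from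
        ((QuotientGroup.mk' Z).map_pow _ _).symm, QuotientGroup.eq_one_iff]
    rw [Subgroup.mem_subgroupOf]
    simpa using hmem
  exact hdone
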